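/- Let Q be a poset in P^ℓ_MFP satisfying the annihilator condition (a.c.). Then Q is quasi-complemented if and only if Q is weakly quasi-complemented. -/

import Mathlib

namespace ZD

variable (Q : Type*) [PartialOrder Q] [OrderBot Q]

variable {Q} in
/-- The lower cone `A^ℓ` of a subset of a poset. -/
def lCone (A : Set Q) : Set Q := {x | ∀ a ∈ A, x ≤ a}

variable {Q} in
/-- The upper cone `A^u` of a subset of a poset. -/
def uCone (A : Set Q) : Set Q := {x | ∀ a ∈ A, a ≤ x}

variable {Q} in
/-- An ideal of a poset: nonempty and `a, b ∈ I` implies `{a,b}^{uℓ} ⊆ I`. -/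
def IsIdeal (I : Set Q) : Prop :=
  I.Nonempty ∧ ∀ a ∈ I, ∀ b ∈ I, lCone (uCone {a, b}) ⊆ I

variable {Q} in
/-- A filter of a poset: nonempty and `a, b ∈ F` implies `{a,b}^{ℓu} ⊆ F`. -/
def IsPFilter (F : Set Q) : Prop :=
  F.Nonempty ∧ ∀ a ∈ F, ∀ b ∈ F, uCone (lCone {a, b}) ⊆ F

variable {Q} in
/-- An ℓ-filter: a filter such that `{a,b}^ℓ ∩ F ≠ ∅` for all `a, b ∈ F`. -/
def IsLFilter (F : Set Q) : Prop :=
  IsPFilter F ∧ ∀ a ∈ F, ∀ b ∈ F, (lCone {a, b} ∩ F).Nonempty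

variable {Q} in
/-- A prime ideal of a poset. -/
def IsPrimeIdeal (P : Set Q) : Prop :=
  IsIdeal P ∧ P ≠ Set.univ ∧ ∀ x y : Q, lCone {x, y} ⊆ P → x ∈ P ∨ y ∈ P

variable {Q} in
/-- A prime filter of a poset. -/
def IsPrimeFilter (F : Set Q) : Prop :=
  IsPFilter F ∧ F ≠ Set.univ ∧ ∀ x y : Q, uCone {x, y} ⊆ F → x ∈ F ∨ y ∈ F

variable {Q} in
/-- A maximal filter: maximal among proper filters. -/
def IsMaxFilter (F : Set Q) : Prop :=
  IsPFilter F ∧ F ≠ Set.univ ∧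
    ∀ G : Set Q, IsPFilter G → G ≠ Set.univ → F ⊆ G → F = G

variable {Q} in
/-- A maximal ℓ-filter: maximal among proper ℓ-filters. -/
def IsMaxLFilter (F : Set Q) : Prop :=
  IsLFilter F ∧ F ≠ Set.univ ∧
    ∀ G : Set Q, IsLFilter G → G ≠ Set.univ → F ⊆ G → F = G

/-- The class `P^ℓ_MFP`: every maximal filter is prime and every maximal ℓ-filter
is a maximal filter. -/
def MemPMFPl : Prop :=
  (∀ F : Set Q, IsMaxFilter F → IsPrimeFilter F) ∧
  (∀ F : Set Q, IsMaxLFilter F → IsMaxFilter F)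

variable {Q} in
/-- A minimal prime ideal of a poset. -/
def IsMinPrimeIdeal (P : Set Q) : Prop :=
  IsPrimeIdeal P ∧ ∀ P' : Set Q, IsPrimeIdeal P' → P' ⊆ P → P' = P

variable {Q} in
/-- The annihilator `x^⊥` of an element. -/
def ann (x : Q) : Set Q := {y | lCone {x, y} = {⊥}}

variable {Q} in
/-- The annihilator `A^⊥` of a subset. -/
def annSet (A : Set Q) : Set Q := {y | ∀ x ∈ A, lCone {x, y} = {⊥}}

variable {Q} in
/-- The smallest ideal `(x] ∨ (y]` containing the principal ideals `(x]` and `(y]`. -/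
def idealSup (x y : Q) : Set Q :=
  ⋂₀ {I : Set Q | IsIdeal I ∧ Set.Iic x ⊆ I ∧ Set.Iic y ⊆ I}

/-- A poset is quasi-complemented if for every `x` there is `y ≠ x` with
`{x,y}^ℓ = {0}` and `((x] ∨ (y])^⊥ = {0}`. -/
def QuasiComplemented : Prop :=
  ∀ x : Q, ∃ y : Q, y ≠ x ∧ lCone {x, y} = {⊥} ∧ annSet (idealSup x y) = {⊥}

/-- A poset is weakly quasi-complemented if for every `x` there are finitely many
`y₁, …, yₙ` (n ≥ 1), all distinct from `x`, with `x^⊥⊥ = y₁^⊥ ∩ ⋯ ∩ yₙ^⊥`. -/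
def WeaklyQuasiComplemented : Prop :=
  ∀ x : Q, ∃ s : Finset Q, s.Nonempty ∧ x ∉ s ∧ annSet (ann x) = ⋂ y ∈ s, ann y

/-- The annihilator condition (a.c.). -/
def SatisfiesAC : Prop := ∀ x y : Q, ∃ z : Q, ann x ∩ ann y = ann z

/-- The prime spectrum of a poset. -/
def Spec := {P : Set Q // IsPrimeIdeal P}

/-- The Zariski topology on `Spec Q`, whose closed sets are the sets
`V(I) = {P : I ⊆ P}` for ideals `I` of `Q`. -/
instance : TopologicalSpace (Spec Q) :=
  TopologicalSpace.generateFrom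
    {U : Set (Spec Q) | ∃ I : Set Q, IsIdeal I ∧ U = {P : Spec Q | ¬ I ⊆ P.1}}

variable {Q} in
/-- `V(x)`: the prime ideals containing `x`. -/
def zV (x : Q) : Set (Spec Q) := {P : Spec Q | x ∈ P.1}

variable {Q} in
/-- `D(x)`: the prime ideals not containing `x`. -/
def zD (x : Q) : Set (Spec Q) := {P : Spec Q | x ∉ P.1}

/-- `Min(Q)` as a subset of `Spec Q`. -/
def MinSpec : Set (Spec Q) := {P : Spec Q | ∀ P' : Set Q, IsPrimeIdeal P' → P' ⊆ P.1 → P' = P.1}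

variable {Q} in
/-- Adjacency in the zero-divisor graph `Γ(Q)`. -/
def zdAdj (x y : Q) : Prop :=
  x ≠ y ∧ x ≠ ⊥ ∧ y ≠ ⊥ ∧ lCone {x, y} = ({⊥} : Set Q)

variable {Q} in
/-- Vertices of the zero-divisor graph `Γ(Q)`: the nonzero zero-divisors. -/
def IsZDVertex (x : Q) : Prop :=
  x ≠ ⊥ ∧ ∃ y : Q, y ≠ ⊥ ∧ lCone {x, y} = ({⊥} : Set Q)

variable {Q} in
/-- `y` is a complement of `x` in `Γ(Q)`. -/
def IsComplementOf (x y : Q) : Prop :=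
  zdAdj x y ∧ ∀ c : Q, ¬ (zdAdj c x ∧ zdAdj c y)

/-- The zero-divisor graph `Γ(Q)` is complemented. -/
def GammaComplemented : Prop :=
  ∀ x : Q, IsZDVertex x → ∃ y : Q, IsComplementOf x y

/-- The zero-divisor graph `Γ(Q)` is uniquely complemented. -/
def GammaUniquelyComplemented : Prop :=
  GammaComplemented Q ∧
    ∀ a b c : Q, IsComplementOf a b → IsComplementOf a c →
      ∀ x : Q, (zdAdj x b ↔ zdAdj x c)

end ZD

set_option linter.unusedSectionVars false
set_option linter.unusedVariables false

namespace ZD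

variable {Q : Type*} [PartialOrder Q] [OrderBot Q]

lemma mem_lCone_pair {a b x : Q} : x ∈ lCone ({a, b} : Set Q) ↔ x ≤ a ∧ x ≤ b := by
  simp [lCone]

lemma mem_uCone_singleton {s x : Q} : x ∈ uCone ({s} : Set Q) ↔ s ≤ x := by
  simp [uCone]

lemma lCone_pair_comm (a b : Q) : lCone ({a, b} : Set Q) = lCone {b, a} := by
  rw [Set.pair_comm]

lemma mem_ann_iff {x y : Q} : y ∈ ann x ↔ lCone ({x, y} : Set Q) = {⊥} := Iff.rfl

lemma lCone_pair_eq_bot {a b : Q} (h : ∀ c : Q, c ≤ a → c ≤ b → c = ⊥) :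
    lCone ({a, b} : Set Q) = {⊥} := by
  ext c
  simp only [mem_lCone_pair, Set.mem_singleton_iff]
  constructor
  · rintro ⟨h1, h2⟩; exact h c h1 h2
  · rintro rfl; exact ⟨bot_le, bot_le⟩

lemma eq_bot_of_lCone {a b c : Q} (h : lCone ({a, b} : Set Q) = {⊥})
    (h1 : c ≤ a) (h2 : c ≤ b) : c = ⊥ := by
  have : c ∈ lCone ({a, b} : Set Q) := mem_lCone_pair.2 ⟨h1, h2⟩
  rwa [h, Set.mem_singleton_iff] at this

lemma bot_mem_ann (t : Q) : ⊥ ∈ ann t :=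
  lCone_pair_eq_bot fun c _ hc => le_bot_iff.1 hc

lemma bot_mem_uCone_lCone_bot {A : Set Q} (hA : lCone A = {⊥}) : (⊥ : Q) ∈ uCone (lCone A) := by
  rw [hA]
  intro z hz
  simp only [Set.mem_singleton_iff] at hz
  subst hz
  exact le_refl ⊥

lemma filter_upclosed {F : Set Q} (hF : IsPFilter F) {a b : Q} (ha : a ∈ F) (hab : a ≤ b) :
    b ∈ F := by
  apply hF.2 a ha a ha
  intro c hc
  exact le_trans (hc a (by simp)) hab

lemma filter_univ_of_bot {F : Set Q} (hF : IsPFilter F) (h : ⊥ ∈ F) : F = Set.univ :=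
  Set.eq_univ_of_forall fun x => filter_upclosed hF h bot_le

lemma exists_max_filter {F : Set Q} (hF : IsPFilter F) (hbot : ⊥ ∉ F) :
    ∃ M : Set Q, IsMaxFilter M ∧ F ⊆ M := by
  have hchainub : ∀ c ⊆ {G : Set Q | IsPFilter G ∧ ⊥ ∉ G}, IsChain (· ⊆ ·) c → c.Nonempty →
      ∃ ub ∈ {G : Set Q | IsPFilter G ∧ ⊥ ∉ G}, ∀ s ∈ c, s ⊆ ub := by
    intro c hc hchain hcne
    obtain ⟨F0, hF0⟩ := hcne
    refine ⟨⋃₀ c, ⟨⟨?_, ?_⟩, ?_⟩, fun s hs => Set.subset_sUnion_of_mem hs⟩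
    · obtain ⟨x, hx⟩ := (hc hF0).1.1
      exact ⟨x, Set.mem_sUnion.2 ⟨F0, hF0, hx⟩⟩
    · rintro a ⟨Fa, hFa, ha⟩ b ⟨Fb, hFb, hb⟩ w hw
      rcases hchain.total hFa hFb with h | h
      · exact Set.mem_sUnion.2 ⟨Fb, hFb, (hc hFb).1.2 a (h ha) b hb hw⟩
      · exact Set.mem_sUnion.2 ⟨Fa, hFa, (hc hFa).1.2 a ha b (h hb) hw⟩
    · rintro ⟨G, hG, hbG⟩
      exact (hc hG).2 hbG
  obtain ⟨M, hFM, hM⟩ :=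
    zorn_subset_nonempty {G : Set Q | IsPFilter G ∧ ⊥ ∉ G} hchainub F ⟨hF, hbot⟩
  refine ⟨M, ⟨hM.prop.1, ?_, ?_⟩, hFM⟩
  · intro h
    exact hM.prop.2 (by rw [h]; trivial)
  · intro G hG hGu hMG
    have hGbot : ⊥ ∉ G := fun h => hGu (filter_univ_of_bot hG h)
    exact le_antisymm hMG (hM.2 ⟨hG, hGbot⟩ hMG)

/-- Under `MemPMFPl` (first half), annihilators are ideals. -/
lemma ann_isIdeal (hQ : ∀ F : Set Q, IsMaxFilter F → IsPrimeFilter F) (t : Q) :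
    IsIdeal (ann t) := by
  refine ⟨⟨⊥, bot_mem_ann t⟩, ?_⟩
  intro a ha b hb q hq
  refine lCone_pair_eq_bot fun s hst hsq => ?_
  by_contra hs
  have hF : IsPFilter (uCone ({s} : Set Q)) := by
    refine ⟨⟨s, mem_uCone_singleton.2 le_rfl⟩, ?_⟩
    intro a' ha' b' hb' w hw
    rw [mem_uCone_singleton] at ha' hb' ⊢
    exact hw s (mem_lCone_pair.2 ⟨ha', hb'⟩)
  have hFbot : ⊥ ∉ uCone ({s} : Set Q) := fun h =>
    hs (le_bot_iff.1 (mem_uCone_singleton.1 h))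
  obtain ⟨M, hM, hFM⟩ := exists_max_filter hF hFbot
  have hMprime := hQ M hM
  have hsM : ∀ z : Q, s ≤ z → z ∈ M := fun z hz => hFM (mem_uCone_singleton.2 hz)
  have htM : t ∈ M := hsM t hst
  have hqM : q ∈ M := hsM q hsq
  have hub : uCone ({a, b} : Set Q) ⊆ M := fun u hu =>
    filter_upclosed hM.1 hqM (hq u hu)
  have hbotM : ⊥ ∉ M := fun h => hM.2.1 (filter_univ_of_bot hM.1 h)
  rcases hMprime.2.2 a b hub with haM | hbM
  · exact hbotM (hM.1.2 a haM t htM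
      (bot_mem_uCone_lCone_bot (by rw [lCone_pair_comm]; exact mem_ann_iff.1 ha)))
  · exact hbotM (hM.1.2 b hbM t htM
      (bot_mem_uCone_lCone_bot (by rw [lCone_pair_comm]; exact mem_ann_iff.1 hb)))

lemma Iic_subset_ann {x t : Q} (h : t ∈ ann x) : Set.Iic x ⊆ ann t := by
  intro q hq
  exact lCone_pair_eq_bot fun c hct hcq =>
    eq_bot_of_lCone (mem_ann_iff.1 h) (le_trans hcq hq) hct

lemma mem_idealSup_left (x y : Q) : x ∈ idealSup x y :=
  fun I hI => hI.2.1 (Set.mem_Iic.2 le_rfl)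

lemma mem_idealSup_right (x y : Q) : y ∈ idealSup x y :=
  fun I hI => hI.2.2 (Set.mem_Iic.2 le_rfl)

/-- Key equality: `(idealSup x y)^⊥ = x^⊥ ∩ y^⊥`. -/
lemma annSet_idealSup (hQ : ∀ F : Set Q, IsMaxFilter F → IsPrimeFilter F) (x y : Q) :
    annSet (idealSup x y) = ann x ∩ ann y := by
  ext t
  constructor
  · intro ht
    exact ⟨ht x (mem_idealSup_left x y), ht y (mem_idealSup_right x y)⟩
  · rintro ⟨htx, hty⟩ q hq
    have h1 : q ∈ ann t :=
      hq (ann t) ⟨ann_isIdeal hQ t, Iic_subset_ann htx, Iic_subset_ann hty⟩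
    rw [lCone_pair_comm]
    exact mem_ann_iff.1 h1

lemma mem_annSet_ann_self (x : Q) : x ∈ annSet (ann x) := by
  intro w hw
  rw [lCone_pair_comm]
  exact mem_ann_iff.1 hw

lemma ann_inter_annSet (x : Q) : ann x ∩ annSet (ann x) = {⊥} := by
  ext w
  simp only [Set.mem_inter_iff, Set.mem_singleton_iff]
  constructor
  · rintro ⟨h1, h2⟩
    exact eq_bot_of_lCone (h2 w h1) le_rfl le_rfl
  · rintro rfl
    exact ⟨bot_mem_ann x, fun v _ => lCone_pair_eq_bot fun c _ hc => le_bot_iff.1 hc⟩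

lemma finset_ann_inter (hac : SatisfiesAC Q) :
    ∀ s : Finset Q, s.Nonempty → ∃ z : Q, (⋂ y ∈ s, ann y) = ann z := by
  classical
  intro s
  induction s using Finset.induction_on with
  | empty => intro h; simp at h
  | insert a s ha ih =>
    intro _
    rcases s.eq_empty_or_nonempty with rfl | hs
    · exact ⟨a, by simp⟩
    · obtain ⟨z, hz⟩ := ih hs
      obtain ⟨z', hz'⟩ := hac a z
      refine ⟨z', ?_⟩
      rw [Finset.set_biInter_insert, hz, hz']

end ZD
open ZD in
/-- A poset `Q` in `P^ℓ_MFP` satisfying the annihilator condition is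
quasi-complemented iff it is weakly quasi-complemented. -/
theorem stmt_11 (Q : Type*) [PartialOrder Q] [OrderBot Q] (hQ : MemPMFPl Q)
    (hac : SatisfiesAC Q) :
    QuasiComplemented Q ↔ WeaklyQuasiComplemented Q := by
  obtain ⟨hMFP, -⟩ := hQ
  constructor
  · intro hqc x
    obtain ⟨y, hyx, hxy, hann⟩ := hqc x
    refine ⟨{y}, Finset.singleton_nonempty y, by simpa using hyx.symm, ?_⟩
    have key : ann x ∩ ann y = ({⊥} : Set Q) := by
      rw [← annSet_idealSup hMFP x y]; exact hann
    have hy : y ∈ ann x := hxy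
    ext z
    simp only [Finset.mem_singleton, Set.iInter_iInter_eq_left]
    constructor
    · intro hz
      exact hz y hy
    · intro hz w hw
      refine lCone_pair_eq_bot fun c hcw hcz => ?_
      have hcx : c ∈ ann x := lCone_pair_eq_bot fun d hdx hdc =>
        eq_bot_of_lCone (mem_ann_iff.1 hw) hdx (le_trans hdc hcw)
      have hcy : c ∈ ann y := lCone_pair_eq_bot fun d hdy hdc =>
        eq_bot_of_lCone (mem_ann_iff.1 hz) hdy (le_trans hdc hcz)
      have hmem : c ∈ (({⊥} : Set Q)) := by
        rw [← key]; exact ⟨hcx, hcy⟩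
      simpa using hmem
  · intro hwqc x
    obtain ⟨s, hsne, hxs, hs⟩ := hwqc x
    obtain ⟨z, hz⟩ := finset_ann_inter hac s hsne
    have hax : annSet (ann x) = ann z := hs.trans hz
    have hxz : x ∈ ann z := by rw [← hax]; exact mem_annSet_ann_self x
    have hzx : z ≠ x := by
      rintro rfl
      have hxbot : z = ⊥ := eq_bot_of_lCone (mem_ann_iff.1 hxz) le_rfl le_rfl
      subst hxbot
      obtain ⟨y, hy⟩ := hsne
      have hyne : y ≠ ⊥ := fun h => hxs (h ▸ hy)
      apply hyne
      have hyann : y ∈ ann (⊥ : Q) := lCone_pair_eq_bot fun c hc _ => le_bot_iff.1 hc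
      have hy2 : y ∈ annSet (ann (⊥ : Q)) := by rw [hax]; exact hyann
      exact eq_bot_of_lCone (hy2 y hyann) le_rfl le_rfl
    refine ⟨z, hzx, ?_, ?_⟩
    · rw [lCone_pair_comm]; exact mem_ann_iff.1 hxz
    · rw [annSet_idealSup hMFP x z, ← hax]
      exact ann_inter_annSet x
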